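/- Let X be an n×d real matrix of full column rank, y ∈ ℝⁿ, λ > 0, θ* the least-squares solution and θ_RR(λ) the ridge regression solution. Then ‖Xθ_RR(λ) − y‖₂ ≤ ‖Xθ* − y‖₂ + (λ/(σ_min(X)² + λ)) · ‖Xθ*‖₂. -/

import Mathlib

open Matrix Real Finset

/-- Euclidean (ℓ₂) norm of a finite-dimensional real vector. -/
noncomputable def euclNorm {ι : Type*} [Fintype ι] (v : ι → ℝ) : ℝ :=
  Real.sqrt (∑ i, v i ^ 2)

/-- Singular values of a real matrix: square roots of the eigenvalues of `Xᵀ X`. -/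
noncomputable def singVals {n d : ℕ} (X : Matrix (Fin n) (Fin d) ℝ) : Fin d → ℝ :=
  fun i => Real.sqrt ((show (Xᵀ * X).IsHermitian by
    simpa only [Matrix.conjTranspose_eq_transpose_of_trivial] using
      Matrix.isHermitian_conjTranspose_mul_self X).eigenvalues i)

/-- Smallest singular value. -/
noncomputable def sigMin {n d : ℕ} [NeZero d] (X : Matrix (Fin n) (Fin d) ℝ) : ℝ :=
  Finset.univ.inf' Finset.univ_nonempty (singVals X)

/-- Least squares solution `θ* = (XᵀX)⁻¹ Xᵀ y`. -/
noncomputable def lsSol {n d : ℕ} (X : Matrix (Fin n) (Fin d) ℝ) (y : Fin n → ℝ) :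
    Fin d → ℝ :=
  ((Xᵀ * X)⁻¹ * Xᵀ).mulVec y

/-- Ridge regression solution `θ_RR(λ) = (XᵀX + λI)⁻¹ Xᵀ y`. -/
noncomputable def rrSol {n d : ℕ} (X : Matrix (Fin n) (Fin d) ℝ) (y : Fin n → ℝ)
    (lam : ℝ) : Fin d → ℝ :=
  ((Xᵀ * X + lam • (1 : Matrix (Fin d) (Fin d) ℝ))⁻¹ * Xᵀ).mulVec y

namespace SpecAux

variable {d : ℕ}

lemma rep_mul {U : Matrix (Fin d) (Fin d) ℝ} (hU : U ∈ Matrix.unitaryGroup (Fin d) ℝ)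
    (w1 w2 : Fin d → ℝ) :
    (U * diagonal w1 * star U) * (U * diagonal w2 * star U)
      = U * diagonal (fun i => w1 i * w2 i) * star U := by
  have h1 : star U * U = 1 := hU.1
  calc (U * diagonal w1 * star U) * (U * diagonal w2 * star U)
      = U * (diagonal w1 * ((star U * U) * (diagonal w2 * star U))) := by
        simp only [Matrix.mul_assoc]
    _ = U * diagonal (fun i => w1 i * w2 i) * star U := by
        rw [h1, Matrix.one_mul, ← Matrix.mul_assoc (diagonal w1),
          Matrix.diagonal_mul_diagonal, Matrix.mul_assoc]

lemma rep_inv {U : Matrix (Fin d) (Fin d) ℝ} (hU : U ∈ Matrix.unitaryGroup (Fin d) ℝ)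
    {w : Fin d → ℝ} (hw : ∀ i, w i ≠ 0) :
    (U * diagonal w * star U)⁻¹ = U * diagonal (fun i => (w i)⁻¹) * star U := by
  apply Matrix.inv_eq_right_inv
  rw [rep_mul hU]
  have h : (fun i => w i * (w i)⁻¹) = fun _ => (1 : ℝ) := by
    funext i; exact mul_inv_cancel₀ (hw i)
  rw [h]
  have : diagonal (fun _ : Fin d => (1:ℝ)) = 1 := Matrix.diagonal_one
  rw [this, Matrix.mul_one]
  exact hU.2

lemma rep_quadform (U : Matrix (Fin d) (Fin d) ℝ) (w : Fin d → ℝ) (v : Fin d → ℝ) :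
    v ⬝ᵥ (U * diagonal w * star U) *ᵥ v = ∑ i, w i * ((star U *ᵥ v) i)^2 := by
  have hs : star U = Uᵀ := by
    rw [Matrix.star_eq_conjTranspose, Matrix.conjTranspose_eq_transpose_of_trivial]
  rw [hs, ← Matrix.mulVec_mulVec, ← Matrix.mulVec_mulVec, Matrix.dotProduct_mulVec,
    ← Matrix.mulVec_transpose]
  simp only [dotProduct, Matrix.mulVec_diagonal]
  exact Finset.sum_congr rfl fun i _ => by ring

lemma enorm_triangle {ι : Type*} [Fintype ι] (a b : ι → ℝ) :
    euclNorm (a + b) ≤ euclNorm a + euclNorm b := by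
  have h : ∀ v : ι → ℝ, euclNorm v = ‖(WithLp.equiv 2 (ι → ℝ)).symm v‖ := by
    intro v
    rw [euclNorm, EuclideanSpace.norm_eq]
    refine congrArg Real.sqrt (Finset.sum_congr rfl fun i _ => ?_)
    simp [Real.norm_eq_abs, sq_abs]
  rw [h, h, h]
  exact norm_add_le _ _

end SpecAux

theorem stmt_1 {n d : ℕ} [NeZero d] (X : Matrix (Fin n) (Fin d) ℝ)
    (hrank : X.rank = d) (y : Fin n → ℝ) (lam : ℝ) (hlam : 0 < lam) :
    euclNorm (X.mulVec (rrSol X y lam) - y) ≤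
      euclNorm (X.mulVec (lsSol X y) - y) +
        (lam / ((sigMin X) ^ 2 + lam)) * euclNorm (X.mulVec (lsSol X y)) := by
  classical
  have hA : (Xᵀ * X).IsHermitian := by
    simpa only [Matrix.conjTranspose_eq_transpose_of_trivial] using
      Matrix.isHermitian_conjTranspose_mul_self X
  set A : Matrix (Fin d) (Fin d) ℝ := Xᵀ * X with hAdef
  set U : Matrix (Fin d) (Fin d) ℝ := (hA.eigenvectorUnitary : Matrix (Fin d) (Fin d) ℝ) with hUdef
  have hU : U ∈ Matrix.unitaryGroup (Fin d) ℝ := hA.eigenvectorUnitary.2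
  set μ : Fin d → ℝ := hA.eigenvalues with hmu
  have hspec : A = U * diagonal μ * star U := by
    conv_lhs => rw [hA.spectral_theorem]
    rw [Unitary.conjStarAlgAut_apply]
    rfl
  have hps : A.PosSemidef := by
    rw [hAdef, ← Matrix.conjTranspose_eq_transpose_of_trivial]
    exact Matrix.posSemidef_conjTranspose_mul_self X
  have hμ0 : ∀ i, 0 ≤ μ i := fun i => hps.eigenvalues_nonneg i
  -- A is invertible
  have hAunit : IsUnit A := by
    rw [← Matrix.mulVec_surjective_iff_isUnit]
    have hr : A.rank = d := by rw [hAdef, Matrix.rank_transpose_mul_self, hrank]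
    have ht : LinearMap.range A.mulVecLin = ⊤ := by
      apply Submodule.eq_top_of_finrank_eq
      rw [← Matrix.rank, hr]
      simp [Module.finrank_fintype_fun_eq_card]
    intro v
    obtain ⟨u, hu⟩ := LinearMap.mem_range.mp (ht ▸ Submodule.mem_top (x := v) (R := ℝ))
    exact ⟨u, hu⟩
  have hAdet : IsUnit A.det := (Matrix.isUnit_iff_isUnit_det A).mp hAunit
  have hAr : A * A⁻¹ = 1 := Matrix.mul_nonsing_inv A hAdet
  -- the regularized matrix
  set M : Matrix (Fin d) (Fin d) ℝ := A + lam • 1 with hMdef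
  have hg : ∀ i, μ i + lam ≠ 0 := fun i => ne_of_gt (by linarith [hμ0 i])
  have hMrep : M = U * diagonal (fun i => μ i + lam) * star U := by
    have hdiag : diagonal (fun i => μ i + lam)
        = diagonal μ + diagonal (fun _ : Fin d => lam) := by
      rw [← Matrix.diagonal_add]
    have hlamrep : lam • (1 : Matrix (Fin d) (Fin d) ℝ)
        = U * diagonal (fun _ : Fin d => lam) * star U := by
      have : diagonal (fun _ : Fin d => lam) = lam • (1 : Matrix (Fin d) (Fin d) ℝ) := by
        rw [Matrix.smul_one_eq_diagonal]
      rw [this, Matrix.mul_smul, Matrix.mul_one, Matrix.smul_mul, hU.2]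
    rw [hMdef, hdiag, Matrix.mul_add, Matrix.add_mul, ← hspec, hlamrep]
  have hMinv : M⁻¹ = U * diagonal (fun i => (μ i + lam)⁻¹) * star U := by
    rw [hMrep]
    exact SpecAux.rep_inv hU hg
  have hMl : M⁻¹ * M = 1 := by
    rw [hMinv, hMrep, SpecAux.rep_mul hU]
    have : (fun i => (μ i + lam)⁻¹ * (μ i + lam)) = fun _ => (1:ℝ) := by
      funext i; exact inv_mul_cancel₀ (hg i)
    rw [this, Matrix.diagonal_one, Matrix.mul_one]
    exact hU.2
  -- key difference identity
  have hMA : M⁻¹ - A⁻¹ = (-lam) • (M⁻¹ * A⁻¹) := by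
    have h1 : M⁻¹ - A⁻¹ = M⁻¹ * (A * A⁻¹) - (M⁻¹ * M) * A⁻¹ := by
      rw [hAr, hMl, Matrix.mul_one, Matrix.one_mul]
    rw [h1, hMdef]
    simp only [Matrix.mul_add, Matrix.add_mul, Matrix.mul_smul, Matrix.smul_mul,
      Matrix.mul_one, Matrix.mul_assoc, neg_smul]
    abel
  have hdiff : rrSol X y lam - lsSol X y = (-lam) • (M⁻¹ *ᵥ lsSol X y) := by
    rw [rrSol, lsSol]
    rw [← hAdef, ← hMdef, ← Matrix.sub_mulVec]
    rw [← Matrix.sub_mul, hMA, Matrix.smul_mul, Matrix.smul_mulVec,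
      Matrix.mul_assoc, ← Matrix.mulVec_mulVec]
  set v : Fin d → ℝ := lsSol X y with hv
  set c : Fin d → ℝ := star U *ᵥ v with hc
  -- quadratic form identities
  have hquad : ∀ u : Fin d → ℝ, ∑ i, (X *ᵥ u) i ^ 2 = u ⬝ᵥ A *ᵥ u := by
    intro u
    have h1 : ∑ i, (X *ᵥ u) i ^ 2 = (X *ᵥ u) ⬝ᵥ (X *ᵥ u) := by
      simp [dotProduct, sq]
    have h2 : u ⬝ᵥ A *ᵥ u = (X *ᵥ u) ⬝ᵥ (X *ᵥ u) := by
      show u ⬝ᵥ (Xᵀ * X) *ᵥ u = _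
      rw [← Matrix.mulVec_mulVec, Matrix.dotProduct_mulVec, Matrix.vecMul_transpose]
    rw [h1, h2]
  have hE1 : ∑ i, (X *ᵥ v) i ^ 2 = ∑ i, μ i * (c i)^2 := by
    rw [hquad v, hspec, SpecAux.rep_quadform]
  -- the perturbation term
  have hpert : ∑ i, (X *ᵥ (rrSol X y lam - lsSol X y)) i ^ 2
      = lam ^ 2 * ∑ i, μ i * ((μ i + lam)⁻¹ * c i) ^ 2 := by
    rw [hdiff, hquad]
    have hsc : ((-lam) • (M⁻¹ *ᵥ v)) ⬝ᵥ A *ᵥ ((-lam) • (M⁻¹ *ᵥ v))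
        = lam ^ 2 * ((M⁻¹ *ᵥ v) ⬝ᵥ A *ᵥ (M⁻¹ *ᵥ v)) := by
      rw [Matrix.mulVec_smul, smul_dotProduct, dotProduct_smul]
      simp only [smul_eq_mul, smul_smul]
      ring
    rw [hsc, hspec, SpecAux.rep_quadform]
    congr 1
    apply Finset.sum_congr rfl
    intro i _
    have hcoord : star U *ᵥ (M⁻¹ *ᵥ v) = fun i => (μ i + lam)⁻¹ * c i := by
      rw [hMinv, Matrix.mulVec_mulVec]
      have heq : star U * ((U * diagonal fun i => (μ i + lam)⁻¹) * star U)
          = diagonal (fun i => (μ i + lam)⁻¹) * star U := by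
        rw [← Matrix.mul_assoc, ← Matrix.mul_assoc, hU.1, Matrix.one_mul]
      rw [heq, ← Matrix.mulVec_mulVec, ← hc]
      funext j
      simp [Matrix.mulVec_diagonal]
    rw [hcoord]
  -- sigma min facts
  have hs0 : 0 ≤ sigMin X := by
    apply Finset.le_inf'
    intro i _
    exact Real.sqrt_nonneg _
  have hsμ : ∀ i, sigMin X ^ 2 ≤ μ i := by
    intro i
    have h1 : sigMin X ≤ singVals X i := Finset.inf'_le _ (Finset.mem_univ i)
    have h2 : sigMin X ^ 2 ≤ singVals X i ^ 2 := by
      apply pow_le_pow_left₀ hs0 h1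
    calc sigMin X ^ 2 ≤ singVals X i ^ 2 := h2
      _ = μ i := Real.sq_sqrt (hμ0 i)
  have hsp : 0 < sigMin X ^ 2 + lam := by positivity
  have hk0 : 0 ≤ lam / (sigMin X ^ 2 + lam) := by positivity
  -- comparison of sums
  have hcomp : lam ^ 2 * ∑ i, μ i * ((μ i + lam)⁻¹ * c i) ^ 2
      ≤ (lam / (sigMin X ^ 2 + lam)) ^ 2 * ∑ i, μ i * (c i) ^ 2 := by
    rw [Finset.mul_sum, Finset.mul_sum]
    apply Finset.sum_le_sum
    intro i _
    have h1 : lam ^ 2 * (μ i * ((μ i + lam)⁻¹ * c i) ^ 2)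
        = (lam / (μ i + lam)) ^ 2 * (μ i * c i ^ 2) := by
      rw [div_pow]; field_simp
    rw [h1]
    apply mul_le_mul_of_nonneg_right _ (mul_nonneg (hμ0 i) (sq_nonneg _))
    have hd : lam / (μ i + lam) ≤ lam / (sigMin X ^ 2 + lam) :=
      div_le_div_of_nonneg_left hlam.le hsp (by linarith [hsμ i])
    exact pow_le_pow_left₀ (div_nonneg hlam.le (by linarith [hμ0 i])) hd 2
  -- put it together
  have hsplit : X *ᵥ rrSol X y lam - y
      = (X *ᵥ lsSol X y - y) + X *ᵥ (rrSol X y lam - lsSol X y) := by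
    rw [Matrix.mulVec_sub]
    abel
  have hbound : euclNorm (X *ᵥ (rrSol X y lam - lsSol X y))
      ≤ (lam / (sigMin X ^ 2 + lam)) * euclNorm (X *ᵥ lsSol X y) := by
    rw [euclNorm, euclNorm, hpert, ← hv, hE1]
    calc Real.sqrt (lam ^ 2 * ∑ i, μ i * ((μ i + lam)⁻¹ * c i) ^ 2)
        ≤ Real.sqrt ((lam / (sigMin X ^ 2 + lam)) ^ 2 * ∑ i, μ i * (c i) ^ 2) :=
          Real.sqrt_le_sqrt hcomp
      _ = (lam / (sigMin X ^ 2 + lam)) * Real.sqrt (∑ i, μ i * (c i) ^ 2) := by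
          rw [Real.sqrt_mul (sq_nonneg _), Real.sqrt_sq hk0]
  calc euclNorm (X *ᵥ rrSol X y lam - y)
      ≤ euclNorm (X *ᵥ lsSol X y - y) + euclNorm (X *ᵥ (rrSol X y lam - lsSol X y)) := by
        rw [hsplit]; exact SpecAux.enorm_triangle _ _
    _ ≤ euclNorm (X *ᵥ lsSol X y - y) + (lam / (sigMin X ^ 2 + lam)) * euclNorm (X *ᵥ lsSol X y) := by
        linarith [hbound]
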